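/- Along any solution μ(t) of the bracket flow μ' = δ_μ(Ric_μ), the scalar curvature sc(t) := tr(Ric_{μ(t)}) satisfies d/dt sc = 2 tr(Ric_μ²). -/

import Mathlib

open Matrix BigOperators

noncomputable section

/-- An element of `V_n`: a skew-symmetric bilinear map `μ : ℝⁿ × ℝⁿ → ℝⁿ`. -/
def IsSkewBil {n : ℕ} (μ : (Fin n → ℝ) → (Fin n → ℝ) → (Fin n → ℝ)) : Prop :=
  (∀ x, IsLinearMap ℝ (μ x)) ∧ (∀ y, IsLinearMap ℝ (fun x => μ x y)) ∧
  (∀ x y, μ x y = - μ y x)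

/-- The matrix of `ad_μ x : y ↦ μ(x,y)` in the canonical basis. -/
def adMat {n : ℕ} (μ : (Fin n → ℝ) → (Fin n → ℝ) → (Fin n → ℝ)) (x : Fin n → ℝ) :
    Matrix (Fin n) (Fin n) ℝ := fun i j => μ x (Pi.single j 1) i

/-- The Ricci operator `Ric_μ = -½ Σᵢ (ad_μ eᵢ)ᵀ(ad_μ eᵢ) + ¼ Σᵢ (ad_μ eᵢ)(ad_μ eᵢ)ᵀ`. -/
def Ric {n : ℕ} (μ : (Fin n → ℝ) → (Fin n → ℝ) → (Fin n → ℝ)) :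
    Matrix (Fin n) (Fin n) ℝ :=
  (-(1/2 : ℝ)) • ∑ i, (adMat μ (Pi.single i 1))ᵀ * adMat μ (Pi.single i 1)
  + (1/4 : ℝ) • ∑ i, adMat μ (Pi.single i 1) * (adMat μ (Pi.single i 1))ᵀ

/-- `δ_μ(α)(x,y) = μ(αx,y) + μ(x,αy) - αμ(x,y)`. -/
def deltaMap {n : ℕ} (μ : (Fin n → ℝ) → (Fin n → ℝ) → (Fin n → ℝ))
    (A : Matrix (Fin n) (Fin n) ℝ) : (Fin n → ℝ) → (Fin n → ℝ) → (Fin n → ℝ) :=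
  fun x y => μ (A.mulVec x) y + μ x (A.mulVec y) - A.mulVec (μ x y)

/-- The inner product `⟨μ,ν⟩ = Σ_{i,j} ⟨μ(eᵢ,eⱼ), ν(eᵢ,eⱼ)⟩` on `V_n`. -/
def innV {n : ℕ} (μ ν : (Fin n → ℝ) → (Fin n → ℝ) → (Fin n → ℝ)) : ℝ :=
  ∑ i, ∑ j, ∑ k,
    μ (Pi.single i 1) (Pi.single j 1) k * ν (Pi.single i 1) (Pi.single j 1) k

/-- `D` is a derivation of the algebra `(ℝⁿ, μ)`. -/
def IsDeriv {n : ℕ} (μ : (Fin n → ℝ) → (Fin n → ℝ) → (Fin n → ℝ))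
    (D : Matrix (Fin n) (Fin n) ℝ) : Prop :=
  ∀ x y, D.mulVec (μ x y) = μ (D.mulVec x) y + μ x (D.mulVec y)

/-- The Jacobi identity. -/
def IsJacobi {n : ℕ} (μ : (Fin n → ℝ) → (Fin n → ℝ) → (Fin n → ℝ)) : Prop :=
  ∀ x y z, μ x (μ y z) + μ y (μ z x) + μ z (μ x y) = 0

/-- `μ` is a nilpotent Lie bracket on `ℝⁿ`. -/
def IsNilBracket {n : ℕ} (μ : (Fin n → ℝ) → (Fin n → ℝ) → (Fin n → ℝ)) : Prop :=
  IsSkewBil μ ∧ IsJacobi μ ∧ ∀ x, IsNilpotent (adMat μ x)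

lemma Ric_apply {n : ℕ} (ν : (Fin n → ℝ) → (Fin n → ℝ) → (Fin n → ℝ)) (p q : Fin n) :
    Ric ν p q = -(1/2) * ∑ i, ∑ k, ν (Pi.single i 1) (Pi.single p 1) k * ν (Pi.single i 1) (Pi.single q 1) k
      + (1/4) * ∑ i, ∑ j, ν (Pi.single i 1) (Pi.single j 1) p * ν (Pi.single i 1) (Pi.single j 1) q := by
  simp [Ric, Matrix.add_apply, Matrix.smul_apply, Matrix.sum_apply, Matrix.mul_apply,
    Matrix.transpose_apply, adMat, Finset.mul_sum]

lemma trace_Ric {n : ℕ} (ν : (Fin n → ℝ) → (Fin n → ℝ) → (Fin n → ℝ)) :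
    (Ric ν).trace = -(1/4) * ∑ i, ∑ j, ∑ k, (ν (Pi.single i 1) (Pi.single j 1) k)^2 := by
  have h1 : ∑ p, ∑ i, ∑ k, ν (Pi.single i 1) (Pi.single p 1) k * ν (Pi.single i 1) (Pi.single p 1) k
      = ∑ i, ∑ j, ∑ k, (ν (Pi.single i 1) (Pi.single j 1) k)^2 := by
    rw [Finset.sum_comm]
    simp [sq]
  have h2 : ∑ p, ∑ i, ∑ j, ν (Pi.single i 1) (Pi.single j 1) p * ν (Pi.single i 1) (Pi.single j 1) p
      = ∑ i, ∑ j, ∑ k, (ν (Pi.single i 1) (Pi.single j 1) k)^2 := by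
    rw [Finset.sum_comm]
    refine Finset.sum_congr rfl fun i _ => ?_
    rw [Finset.sum_comm]
    simp [sq]
  simp only [Matrix.trace, Matrix.diag, Ric_apply, Finset.sum_add_distrib, ← Finset.mul_sum,
    h1, h2]
  ring

lemma expand_left {n : ℕ} {ν : (Fin n → ℝ) → (Fin n → ℝ) → (Fin n → ℝ)}
    (hsb : IsSkewBil ν) (x y : Fin n → ℝ) (k : Fin n) :
    ν x y k = ∑ l, x l * ν (Pi.single l 1) y k := by
  have L := IsLinearMap.mk' _ (hsb.2.1 y)
  have hx : x = ∑ l, x l • (Pi.single l 1 : Fin n → ℝ) := by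
    simp [← Pi.single_smul, Finset.univ_sum_single]
  have : ν x y = ∑ l, x l • ν (Pi.single l 1) y := by
    rw [← IsLinearMap.mk'_apply (hsb.2.1 y) x]
    conv_lhs => rw [hx]
    rw [map_sum]
    simp
  rw [this]
  simp

lemma expand_right {n : ℕ} {ν : (Fin n → ℝ) → (Fin n → ℝ) → (Fin n → ℝ)}
    (hsb : IsSkewBil ν) (x y : Fin n → ℝ) (k : Fin n) :
    ν x y k = ∑ l, y l * ν x (Pi.single l 1) k := by
  have L := IsLinearMap.mk' _ (hsb.1 x)
  have hy : y = ∑ l, y l • (Pi.single l 1 : Fin n → ℝ) := by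
    simp [← Pi.single_smul, Finset.univ_sum_single]
  have : ν x y = ∑ l, y l • ν x (Pi.single l 1) := by
    rw [← IsLinearMap.mk'_apply (hsb.1 x) y]
    conv_lhs => rw [hy]
    rw [map_sum]
    simp
  rw [this]
  simp

def cc {n : ℕ} (ν : (Fin n → ℝ) → (Fin n → ℝ) → (Fin n → ℝ)) (i j k : Fin n) : ℝ :=
  ν (Pi.single i 1) (Pi.single j 1) k

def QQ {n : ℕ} (ν : (Fin n → ℝ) → (Fin n → ℝ) → (Fin n → ℝ)) (p q : Fin n) : ℝ :=
  ∑ i, ∑ k, cc ν i p k * cc ν i q k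

def TT {n : ℕ} (ν : (Fin n → ℝ) → (Fin n → ℝ) → (Fin n → ℝ)) (p q : Fin n) : ℝ :=
  ∑ i, ∑ j, cc ν i j p * cc ν i j q

lemma sum4 {M : Type*} [AddCommMonoid M] {n : ℕ} (f : Fin n → Fin n → Fin n → Fin n → M) :
    ∑ i, ∑ j, ∑ k, ∑ l, f i j k l = ∑ l, ∑ i, ∑ j, ∑ k, f i j k l := by
  symm
  rw [Finset.sum_comm]
  refine Finset.sum_congr rfl fun i _ => ?_
  rw [Finset.sum_comm]
  refine Finset.sum_congr rfl fun j _ => ?_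
  rw [Finset.sum_comm]

lemma sum4' {M : Type*} [AddCommMonoid M] {n : ℕ} (f : Fin n → Fin n → Fin n → Fin n → M) :
    ∑ i, ∑ j, ∑ k, ∑ l, f i j k l = ∑ k, ∑ l, ∑ i, ∑ j, f i j k l :=
  (sum4 f).trans (sum4 fun l i j k => f i j k l)

lemma key {n : ℕ} {ν : (Fin n → ℝ) → (Fin n → ℝ) → (Fin n → ℝ)} (hsb : IsSkewBil ν) :
    ∑ i, ∑ j, ∑ k, cc ν i j k * deltaMap ν (Ric ν) (Pi.single i 1) (Pi.single j 1) k
      = -4 * ((Ric ν) * (Ric ν)).trace := by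
  set R := Ric ν with hRdef
  have hskew : ∀ i j k, cc ν i j k = - cc ν j i k := by
    intro i j k
    have := congrFun (hsb.2.2 (Pi.single i 1) (Pi.single j 1)) k
    simpa [cc] using this
  have hR : ∀ p q, R p q = -(1/2) * QQ ν p q + (1/4) * TT ν p q := by
    intro p q; rw [hRdef, Ric_apply]; rfl
  have hQrel : ∀ p q, QQ ν p q = -2 * R p q + (1/2) * TT ν p q := by
    intro p q; rw [hR]; ring
  have hRsymm : ∀ p q, R p q = R q p := by
    intro p q
    rw [hR, hR]
    simp only [QQ, TT]
    rw [show (∑ i, ∑ k, cc ν i p k * cc ν i q k) = ∑ i, ∑ k, cc ν i q k * cc ν i p k from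
      by simp [mul_comm]]
    rw [show (∑ i, ∑ j, cc ν i j p * cc ν i j q) = ∑ i, ∑ j, cc ν i j q * cc ν i j p from
      by simp [mul_comm]]
  have hPQ : ∀ p q, (∑ j, ∑ k, cc ν p j k * cc ν q j k) = QQ ν p q := by
    intro p q
    simp only [QQ]
    refine Finset.sum_congr rfl fun j _ => Finset.sum_congr rfl fun k _ => ?_
    rw [hskew p j k, hskew q j k]
    ring
  have hQsymm : ∀ p q, QQ ν p q = QQ ν q p := by
    intro p q; simp [QQ, mul_comm]
  -- expand deltaMap
  have hd : ∀ i j k, deltaMap ν R (Pi.single i 1) (Pi.single j 1) k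
      = (∑ l, R l i * cc ν l j k) + (∑ l, R l j * cc ν i l k) - (∑ l, R k l * cc ν i j l) := by
    intro i j k
    simp only [deltaMap, Pi.add_apply, Pi.sub_apply]
    have e1 : ν (R.mulVec (Pi.single i 1)) (Pi.single j 1) k = ∑ l, R l i * cc ν l j k := by
      rw [expand_left hsb]
      simp [cc, Matrix.mulVec_single]
    have e2 : ν (Pi.single i 1) (R.mulVec (Pi.single j 1)) k = ∑ l, R l j * cc ν i l k := by
      rw [expand_right hsb]
      simp [cc, Matrix.mulVec_single]
    have e3 : R.mulVec (ν (Pi.single i 1) (Pi.single j 1)) k = ∑ l, R k l * cc ν i j l := by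
      simp [Matrix.mulVec, dotProduct, cc]
    rw [e1, e2, e3]
  have hA : ∑ i, ∑ j, ∑ k, cc ν i j k * ∑ l, R l i * cc ν l j k
      = ∑ p, ∑ q, R p q * QQ ν p q := by
    calc ∑ i, ∑ j, ∑ k, cc ν i j k * ∑ l, R l i * cc ν l j k
        = ∑ i, ∑ j, ∑ k, ∑ l, cc ν i j k * (R l i * cc ν l j k) := by
          simp only [Finset.mul_sum]
      _ = ∑ l, ∑ i, ∑ j, ∑ k, cc ν i j k * (R l i * cc ν l j k) := sum4 _
      _ = ∑ p, ∑ q, R p q * QQ ν p q := by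
          refine Finset.sum_congr rfl fun p _ => Finset.sum_congr rfl fun q _ => ?_
          rw [← hPQ p q, Finset.mul_sum]
          refine Finset.sum_congr rfl fun j _ => ?_
          rw [Finset.mul_sum]
          refine Finset.sum_congr rfl fun k _ => ?_
          ring
  have hB : ∑ i, ∑ j, ∑ k, cc ν i j k * ∑ l, R l j * cc ν i l k
      = ∑ p, ∑ q, R p q * QQ ν p q := by
    calc ∑ i, ∑ j, ∑ k, cc ν i j k * ∑ l, R l j * cc ν i l k
        = ∑ i, ∑ j, ∑ k, ∑ l, cc ν i j k * (R l j * cc ν i l k) := by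
          simp only [Finset.mul_sum]
      _ = ∑ l, ∑ i, ∑ j, ∑ k, cc ν i j k * (R l j * cc ν i l k) := sum4 _
      _ = ∑ p, ∑ q, R p q * QQ ν p q := by
          refine Finset.sum_congr rfl fun p _ => ?_
          rw [Finset.sum_comm]
          refine Finset.sum_congr rfl fun q _ => ?_
          rw [hQsymm p q, QQ, Finset.mul_sum]
          refine Finset.sum_congr rfl fun i _ => ?_
          rw [Finset.mul_sum]
          refine Finset.sum_congr rfl fun k _ => ?_
          ring
  have hC : ∑ i, ∑ j, ∑ k, cc ν i j k * ∑ l, R k l * cc ν i j l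
      = ∑ p, ∑ q, R p q * TT ν p q := by
    calc ∑ i, ∑ j, ∑ k, cc ν i j k * ∑ l, R k l * cc ν i j l
        = ∑ i, ∑ j, ∑ k, ∑ l, cc ν i j k * (R k l * cc ν i j l) := by
          simp only [Finset.mul_sum]
      _ = ∑ k, ∑ l, ∑ i, ∑ j, cc ν i j k * (R k l * cc ν i j l) := sum4' _
      _ = ∑ p, ∑ q, R p q * TT ν p q := by
          refine Finset.sum_congr rfl fun p _ => Finset.sum_congr rfl fun q _ => ?_
          rw [TT, Finset.mul_sum]
          refine Finset.sum_congr rfl fun i _ => ?_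
          rw [Finset.mul_sum]
          refine Finset.sum_congr rfl fun j _ => ?_
          ring
  have htr : ((R : Matrix (Fin n) (Fin n) ℝ) * R).trace = ∑ p, ∑ q, R p q * R p q := by
    rw [Matrix.trace]
    simp only [Matrix.diag, Matrix.mul_apply]
    refine Finset.sum_congr rfl fun p _ => Finset.sum_congr rfl fun q _ => ?_
    rw [← hRsymm p q]
  calc ∑ i, ∑ j, ∑ k, cc ν i j k * deltaMap ν R (Pi.single i 1) (Pi.single j 1) k
      = ∑ i, ∑ j, ∑ k, (cc ν i j k * ∑ l, R l i * cc ν l j k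
          + cc ν i j k * ∑ l, R l j * cc ν i l k
          - cc ν i j k * ∑ l, R k l * cc ν i j l) := by
        refine Finset.sum_congr rfl fun i _ => Finset.sum_congr rfl fun j _ =>
          Finset.sum_congr rfl fun k _ => ?_
        rw [hd]; ring
    _ = (∑ i, ∑ j, ∑ k, cc ν i j k * ∑ l, R l i * cc ν l j k)
          + (∑ i, ∑ j, ∑ k, cc ν i j k * ∑ l, R l j * cc ν i l k)
          - (∑ i, ∑ j, ∑ k, cc ν i j k * ∑ l, R k l * cc ν i j l) := by
        simp [Finset.sum_add_distrib, Finset.sum_sub_distrib]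
    _ = (∑ p, ∑ q, R p q * QQ ν p q) + (∑ p, ∑ q, R p q * QQ ν p q)
          - (∑ p, ∑ q, R p q * TT ν p q) := by rw [hA, hB, hC]
    _ = ∑ p, ∑ q, (-4) * (R p q * R p q) := by
        rw [← Finset.sum_add_distrib, ← Finset.sum_sub_distrib]
        refine Finset.sum_congr rfl fun p _ => ?_
        rw [← Finset.sum_add_distrib, ← Finset.sum_sub_distrib]
        refine Finset.sum_congr rfl fun q _ => ?_
        rw [hQrel]; ring
    _ = -4 * ((R : Matrix (Fin n) (Fin n) ℝ) * R).trace := by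
        rw [htr, Finset.mul_sum]
        refine Finset.sum_congr rfl fun p _ => ?_
        rw [Finset.mul_sum]

/-- along the bracket flow, `d/dt tr(Ric_μ) = 2 tr(Ric_μ²)`. -/
theorem stmt13 {n : ℕ} (μ : ℝ → (Fin n → ℝ) → (Fin n → ℝ) → (Fin n → ℝ))
    (hsb : ∀ t, IsSkewBil (μ t))
    (hflow : ∀ t, ∀ x y : Fin n → ℝ,
      HasDerivAt (fun s => μ s x y) (deltaMap (μ t) (Ric (μ t)) x y) t)
    (t : ℝ) :
    HasDerivAt (fun s => (Ric (μ s)).trace)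
      (2 * (Ric (μ t) * Ric (μ t)).trace) t := by
  have hs : (fun s => (Ric (μ s)).trace)
      = fun s => -(1/4) * ∑ i, ∑ j, ∑ k, (μ s (Pi.single i 1) (Pi.single j 1) k)^2 :=
    funext fun s => trace_Ric (μ s)
  have hcomp : ∀ i j k : Fin n, HasDerivAt (fun s => μ s (Pi.single i 1) (Pi.single j 1) k)
      (deltaMap (μ t) (Ric (μ t)) (Pi.single i 1) (Pi.single j 1) k) t :=
    fun i j k => hasDerivAt_pi.mp (hflow t _ _) k
  have hsum : HasDerivAt
      (fun s => ∑ i, ∑ j, ∑ k, (μ s (Pi.single i 1) (Pi.single j 1) k)^2)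
      (∑ i, ∑ j, ∑ k, 2 * μ t (Pi.single i 1) (Pi.single j 1) k
        * deltaMap (μ t) (Ric (μ t)) (Pi.single i 1) (Pi.single j 1) k) t := by
    refine HasDerivAt.fun_sum fun i _ => HasDerivAt.fun_sum fun j _ => HasDerivAt.fun_sum fun k _ => ?_
    have := (hcomp i j k).fun_pow 2
    simpa using this
  have hfinal := hsum.const_mul (-(1/4) : ℝ)
  rw [hs]
  convert hfinal using 1
  case e'_4 => rfl
  case e'_5 => rfl
  have hk := key (hsb t)
  simp only [cc] at hk
  have h2 : (∑ i, ∑ j, ∑ k, 2 * μ t (Pi.single i 1) (Pi.single j 1) k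
        * deltaMap (μ t) (Ric (μ t)) (Pi.single i 1) (Pi.single j 1) k)
      = 2 * ∑ i, ∑ j, ∑ k, μ t (Pi.single i 1) (Pi.single j 1) k
        * deltaMap (μ t) (Ric (μ t)) (Pi.single i 1) (Pi.single j 1) k := by
    simp [Finset.mul_sum, mul_assoc]
  rw [h2, hk]
  ring
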